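/- Let 𝔸 = (A, ≤, →, Σ) be an implicative algebra with |A| < κ for a strongly inaccessible cardinal κ, and let W, ∈_W, =_W and the interpretation ‖·‖ be as defined below. Then W validates every instance of the Separation scheme: for every formula in context φ[w₁,…,wₙ,x,z], the interpretation of ∀w₁…∀wₙ ∀x ∃y (∀z(z ∈ y → (z ∈ x ∧ φ)) ∧ ∀z(z ∈ x → (φ → z ∈ y))) belongs to Σ. -/

import Mathlib

universe u

/-- An implicative algebra `𝔸 = (A, ≤, →, Σ)`:  a complete lattice `(A, ≤)` together with an
implication `imp` which is antitone in its first argument, monotone in its second argument and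
turns infima in the second argument into infima, and a separator `Sig ⊆ A` which is upward
closed, closed under modus ponens and contains the combinators `K` and `S`. -/
structure ImplicativeAlgebra (A : Type u) [CompleteLattice A] where
  imp : A → A → A
  imp_antitone : ∀ ⦃a a' b : A⦄, a ≤ a' → imp a' b ≤ imp a b
  imp_monotone : ∀ ⦃a b b' : A⦄, b ≤ b' → imp a b ≤ imp a b'
  imp_sInf : ∀ (a : A) (S : Set A), imp a (sInf S) = ⨅ b ∈ S, imp a b
  Sig : Set A
  Sig_upward : ∀ ⦃a b : A⦄, a ∈ Sig → a ≤ b → b ∈ Sig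
  Sig_mp : ∀ ⦃a b : A⦄, imp a b ∈ Sig → a ∈ Sig → b ∈ Sig
  Sig_K : (⨅ a : A, ⨅ b : A, imp a (imp b a)) ∈ Sig
  Sig_S : (⨅ a : A, ⨅ b : A, ⨅ c : A,
      imp (imp a (imp b c)) (imp (imp a b) (imp a c))) ∈ Sig

namespace ImplicativeAlgebra

variable {A : Type u} [CompleteLattice A]

/-- `a × b := ⨅ x, ((a → (b → x)) → x)`. -/
def times (IA : ImplicativeAlgebra A) (a b : A) : A :=
  ⨅ x : A, IA.imp (IA.imp a (IA.imp b x)) x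

/-- `a + b := ⨅ x, ((a → x) → ((b → x) → x))`. -/
def plus (IA : ImplicativeAlgebra A) (a b : A) : A :=
  ⨅ x : A, IA.imp (IA.imp a x) (IA.imp (IA.imp b x) x)

/-- `∃⃗_{i} f i := ⨅ x, ((⨅ i, (f i → x)) → x)`.  (`∀⃗` is just `⨅`.) -/
def aex (IA : ImplicativeAlgebra A) {ι : Sort*} (f : ι → A) : A :=
  ⨅ x : A, IA.imp (⨅ i, IA.imp (f i) x) x

/-- `φ ⊢_{Σ[I]} ψ` iff `⨅ i, (φ i → ψ i) ∈ Σ`. -/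
def SigLe (IA : ImplicativeAlgebra A) {ι : Sort*} (f g : ι → A) : Prop :=
  (⨅ i, IA.imp (f i) (g i)) ∈ IA.Sig

/-- `φ ≡_{Σ[I]} ψ` iff `φ ⊢_{Σ[I]} ψ` and `ψ ⊢_{Σ[I]} φ`. -/
def SigEquiv (IA : ImplicativeAlgebra A) {ι : Sort*} (f g : ι → A) : Prop :=
  IA.SigLe f g ∧ IA.SigLe g f

end ImplicativeAlgebra

/-- Pre-elements of the cumulative hierarchy of partial functions valued in `A`:
an element is an `A`-labelled family of previously constructed elements, i.e. a partial
function (presented by a family indexed by its domain) from earlier elements to `A`. -/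
inductive PreW (A : Type u) : Type (u + 1)
  | mk (ι : Type u) (fam : ι → PreW A) (val : ι → A)

namespace PreW

variable {A : Type u}

/-- The (index type of the) domain of a partial function. -/
def dom : PreW A → Type u
  | ⟨ι, _, _⟩ => ι

/-- The family of elements of the domain. -/
def fam : (w : PreW A) → w.dom → PreW A
  | ⟨_, f, _⟩ => f

/-- The values in `A` of the partial function. -/
def val : (w : PreW A) → w.dom → A
  | ⟨_, _, v⟩ => v

/-- `w` is hereditarily of size `< κ`:  this carves out exactly the elements of the stage
`W_κ` of the hierarchy (for `κ` inaccessible). -/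
def HSmall (κ : Cardinal.{u}) : PreW A → Prop
  | ⟨ι, f, _⟩ => Cardinal.mk ι < κ ∧ ∀ i, HSmall κ (f i)

theorem HSmall.fam {κ : Cardinal.{u}} :
    ∀ {w : PreW A}, w.HSmall κ → ∀ i : w.dom, (w.fam i).HSmall κ
  | ⟨_, _, _⟩, h, i => h.2 i

/-- The rank of an element of the hierarchy. -/
noncomputable def rank : PreW A → Ordinal.{u}
  | ⟨_, f, _⟩ => ⨆ i, Order.succ (rank (f i))

theorem rank_lt_mk {ι : Type u} (f : ι → PreW A) (v : ι → A) (i : ι) :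
    (f i).rank < (PreW.mk ι f v).rank := by
  have h : Order.succ (f i).rank ≤ ⨆ j, Order.succ (f j).rank := Ordinal.le_iSup _ i
  have : (f i).rank < ⨆ j, Order.succ (f j).rank :=
    lt_of_lt_of_le (Order.lt_succ _) h
  simpa [rank] using this

end PreW

namespace ImplicativeAlgebra

variable {A : Type u} [CompleteLattice A]

/-- `α =_W β`, defined by recursion on rank:
`α =_W β := (α ⊆_W β) × (β ⊆_W α)` where
`α ⊆_W β := ∀⃗_{t ∈ dom α} (α t → (fam α t ∈_W β))` and
`γ ∈_W β := ∃⃗_{s ∈ dom β} (β s × (fam β s =_W γ))`. -/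
noncomputable def eqW (IA : ImplicativeAlgebra A) : PreW A → PreW A → A
  | ⟨ι₁, f₁, v₁⟩, ⟨ι₂, f₂, v₂⟩ =>
    IA.times
      (⨅ t : ι₁, IA.imp (v₁ t)
        (IA.aex fun s : ι₂ => IA.times (v₂ s) (IA.eqW (f₂ s) (f₁ t))))
      (⨅ t : ι₂, IA.imp (v₂ t)
        (IA.aex fun s : ι₁ => IA.times (v₁ s) (IA.eqW (f₁ s) (f₂ t))))
termination_by α β => max α.rank β.rank
decreasing_by
  · exact max_lt (lt_max_of_lt_right (PreW.rank_lt_mk f₂ v₂ s))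
      (lt_max_of_lt_left (PreW.rank_lt_mk f₁ v₁ t))
  · exact max_lt (lt_max_of_lt_left (PreW.rank_lt_mk f₁ v₁ s))
      (lt_max_of_lt_right (PreW.rank_lt_mk f₂ v₂ t))

/-- `α ∈_W β := ∃⃗_{s ∈ dom β} (β s × (fam β s =_W α))`. -/
noncomputable def memW (IA : ImplicativeAlgebra A) (α β : PreW A) : A :=
  IA.aex fun s : β.dom => IA.times (β.val s) (IA.eqW (β.fam s) α)

/-- `α ⊆_W β := ∀⃗_{t ∈ dom α} (α t → (fam α t ∈_W β))`. -/
noncomputable def subW (IA : ImplicativeAlgebra A) (α β : PreW A) : A :=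
  ⨅ t : α.dom, IA.imp (α.val t) (IA.memW (α.fam t) β)

end ImplicativeAlgebra

/-- The stage `W = W_κ` of the hierarchy: all hereditarily `< κ`-sized elements. -/
def WSet (A : Type u) (κ : Cardinal.{u}) : Type (u + 1) :=
  {w : PreW A // w.HSmall κ}

/-- An element of the domain of `w ∈ W`, as an element of `W`. -/
def WSet.fam {A : Type u} {κ : Cardinal.{u}} (w : WSet A κ) (i : w.1.dom) : WSet A κ :=
  ⟨w.1.fam i, w.2.fam i⟩

/-- Formulas (in context of length `n`) of the first-order language of set theory, with
(de Bruijn-style) variables `Fin n`, binary predicates `∈` and `=`, connectives `⊥`, `∧`, `∨`,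
`→` and quantifiers `∃`, `∀` (binding the last variable of the enlarged context). -/
inductive SetFormula : ℕ → Type
  | bot {n : ℕ} : SetFormula n
  | mem {n : ℕ} (i j : Fin n) : SetFormula n
  | eq {n : ℕ} (i j : Fin n) : SetFormula n
  | and {n : ℕ} (φ ψ : SetFormula n) : SetFormula n
  | or {n : ℕ} (φ ψ : SetFormula n) : SetFormula n
  | imp {n : ℕ} (φ ψ : SetFormula n) : SetFormula n
  | ex {n : ℕ} (φ : SetFormula (n + 1)) : SetFormula n
  | all {n : ℕ} (φ : SetFormula (n + 1)) : SetFormula n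

namespace SetFormula

/-- Renaming of variables (since the only terms of the language of set theory are variables,
substitution is a special case). -/
def rename : {n m : ℕ} → (Fin n → Fin m) → SetFormula n → SetFormula m
  | _, _, _, .bot => .bot
  | _, _, f, .mem i j => .mem (f i) (f j)
  | _, _, f, .eq i j => .eq (f i) (f j)
  | _, _, f, .and φ ψ => .and (φ.rename f) (ψ.rename f)
  | _, _, f, .or φ ψ => .or (φ.rename f) (ψ.rename f)
  | _, _, f, .imp φ ψ => .imp (φ.rename f) (ψ.rename f)
  | _, _, f, .ex φ => .ex (φ.rename (Fin.snoc (Fin.castSucc ∘ f) (Fin.last _)))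
  | _, _, f, .all φ => .all (φ.rename (Fin.snoc (Fin.castSucc ∘ f) (Fin.last _)))

/-- Universal closure `∀x₁ … ∀xₙ φ` of a formula in context of length `n`. -/
def allClose : {n : ℕ} → SetFormula n → SetFormula 0
  | 0, φ => φ
  | _ + 1, φ => allClose (.all φ)

end SetFormula

namespace ImplicativeAlgebra

variable {A : Type u} [CompleteLattice A]

/-- The interpretation `‖φ[x₁,…,xₙ]‖ : Wⁿ → A` of a formula in context, by recursion on the
structure of `φ`:  atomic formulas are interpreted by `∈_W` and `=_W`, `∧` by `×`, `∨` by `+`,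
`→` by `→`, `∃` by `∃⃗` over `W` and `∀` by `∀⃗` (i.e. `⨅`) over `W`. -/
noncomputable def interp (IA : ImplicativeAlgebra A) (κ : Cardinal.{u}) :
    {n : ℕ} → SetFormula n → (Fin n → WSet A κ) → A
  | _, .bot, _ => ⊥
  | _, .mem i j, v => IA.memW (v i).1 (v j).1
  | _, .eq i j, v => IA.eqW (v i).1 (v j).1
  | _, .and φ ψ, v => IA.times (IA.interp κ φ v) (IA.interp κ ψ v)
  | _, .or φ ψ, v => IA.plus (IA.interp κ φ v) (IA.interp κ ψ v)
  | _, .imp φ ψ, v => IA.imp (IA.interp κ φ v) (IA.interp κ ψ v)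
  | _, .ex φ, v => IA.aex fun β : WSet A κ => IA.interp κ φ (Fin.snoc v β)
  | _, .all φ, v => ⨅ β : WSet A κ, IA.interp κ φ (Fin.snoc v β)

end ImplicativeAlgebra

/-! ### Infrastructure: application, abstraction, combinators -/

namespace ImplicativeAlgebra

variable {A : Type u} [CompleteLattice A] (IA : ImplicativeAlgebra A)

theorem imp_iInf {ι : Sort*} (a : A) (f : ι → A) :
    IA.imp a (⨅ i, f i) = ⨅ i, IA.imp a (f i) := by
  rw [iInf, IA.imp_sInf, iInf_range]

/-- Application in an implicative algebra. -/
def app (a b : A) : A := sInf {c | a ≤ IA.imp b c}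

theorem le_imp_app (a b : A) : a ≤ IA.imp b (IA.app a b) := by
  rw [app, sInf_eq_iInf, IA.imp_iInf]
  exact le_iInf fun c => by
    rw [IA.imp_iInf]
    exact le_iInf fun hc => hc

theorem app_le {a b c : A} (h : a ≤ IA.imp b c) : IA.app a b ≤ c := sInf_le h

theorem app_le₂ {a b b' c : A} (h : a ≤ IA.imp b c) (hb : b' ≤ b) : IA.app a b' ≤ c :=
  IA.app_le (h.trans (IA.imp_antitone hb))

theorem app_mono {a a' b b' : A} (ha : a ≤ a') (hb : b ≤ b') : IA.app a b ≤ IA.app a' b' :=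
  IA.app_le <| ha.trans <| (IA.le_imp_app a' b').trans (IA.imp_antitone hb)

theorem app_Sig {a b : A} (ha : a ∈ IA.Sig) (hb : b ∈ IA.Sig) : IA.app a b ∈ IA.Sig :=
  IA.Sig_mp (IA.Sig_upward ha (IA.le_imp_app a b)) hb

/-- Abstraction in an implicative algebra. -/
def abs (f : A → A) : A := ⨅ a, IA.imp a (f a)

theorem abs_le (f : A → A) (a : A) : IA.abs f ≤ IA.imp a (f a) := iInf_le _ a

theorem app_abs (f : A → A) (a : A) : IA.app (IA.abs f) a ≤ f a := IA.app_le (IA.abs_le f a)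

theorem abs_le_imp {f : A → A} {a b : A} (h : f a ≤ b) : IA.abs f ≤ IA.imp a b :=
  (IA.abs_le f a).trans (IA.imp_monotone h)

/-- The `K` combinator. -/
def Kc : A := ⨅ a : A, ⨅ b : A, IA.imp a (IA.imp b a)

/-- The `S` combinator. -/
def Sc : A := ⨅ a : A, ⨅ b : A, ⨅ c : A,
  IA.imp (IA.imp a (IA.imp b c)) (IA.imp (IA.imp a b) (IA.imp a c))

theorem Kc_Sig : IA.Kc ∈ IA.Sig := IA.Sig_K
theorem Sc_Sig : IA.Sc ∈ IA.Sig := IA.Sig_S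

theorem Kc_le (a b : A) : IA.Kc ≤ IA.imp a (IA.imp b a) := by
  exact (iInf_le _ a).trans (iInf_le _ b)

theorem Sc_le (a b c : A) :
    IA.Sc ≤ IA.imp (IA.imp a (IA.imp b c)) (IA.imp (IA.imp a b) (IA.imp a c)) :=
  ((iInf_le _ a).trans (iInf_le _ b)).trans (iInf_le _ c)

theorem app_Kc {a b c : A} (h : c ≤ a) : IA.app (IA.app IA.Kc c) b ≤ a :=
  IA.app_le (IA.app_le₂ (IA.Kc_le a b) h)

theorem app_Sc (f g a : A) :
    IA.app (IA.app (IA.app IA.Sc f) g) a ≤ IA.app (IA.app f a) (IA.app g a) := by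
  have hf : f ≤ IA.imp a (IA.imp (IA.app g a) (IA.app (IA.app f a) (IA.app g a))) :=
    (IA.le_imp_app f a).trans (IA.imp_monotone (IA.le_imp_app _ _))
  have hg : g ≤ IA.imp a (IA.app g a) := IA.le_imp_app g a
  have h1 : IA.app IA.Sc f ≤ IA.imp (IA.imp a (IA.app g a))
      (IA.imp a (IA.app (IA.app f a) (IA.app g a))) :=
    IA.app_le ((IA.Sc_le a (IA.app g a) (IA.app (IA.app f a) (IA.app g a))).trans
      (IA.imp_antitone hf))
  exact IA.app_le (IA.app_le₂ h1 hg)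

/-- The identity combinator. -/
def Ic : A := IA.app (IA.app IA.Sc IA.Kc) IA.Kc

theorem app_Ic (a : A) : IA.app IA.Ic a ≤ a :=
  (IA.app_Sc IA.Kc IA.Kc a).trans (IA.app_Kc le_rfl)

theorem Ic_Sig : IA.Ic ∈ IA.Sig := IA.app_Sig (IA.app_Sig IA.Sc_Sig IA.Kc_Sig) IA.Kc_Sig

theorem Ic_le (a : A) : IA.Ic ≤ IA.imp a a := by
  have : IA.Ic ≤ IA.imp a (IA.app IA.Ic a) := IA.le_imp_app _ _
  exact this.trans (IA.imp_monotone (IA.app_Ic a))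

end ImplicativeAlgebra
/-! ### Combinatory completeness -/

namespace ImplicativeAlgebra

variable {A : Type u} [CompleteLattice A]

/-- Lambda-free combinatory terms with constants from `A` and `n` free variables. -/
inductive SKTm (A : Type u) : ℕ → Type u
  | var {n} : Fin n → SKTm A n
  | const {n} : A → SKTm A n
  | app {n} : SKTm A n → SKTm A n → SKTm A n

namespace SKTm

/-- Denotation of a combinatory term in an environment. -/
@[simp] def den (IA : ImplicativeAlgebra A) : ∀ {n}, SKTm A n → (Fin n → A) → A
  | _, var i, ρ => ρ i
  | _, const c, _ => c
  | _, app u v, ρ => IA.app (den IA u ρ) (den IA v ρ)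

/-- All constants are in the separator. -/
@[simp] def Good (IA : ImplicativeAlgebra A) : ∀ {n}, SKTm A n → Prop
  | _, var _ => True
  | _, const c => c ∈ IA.Sig
  | _, app u v => Good IA u ∧ Good IA v

theorem den_Sig (IA : ImplicativeAlgebra A) :
    ∀ {n} (t : SKTm A n) (ρ : Fin n → A), t.Good IA → (∀ i, ρ i ∈ IA.Sig) →
      t.den IA ρ ∈ IA.Sig
  | _, var i, ρ, _, hρ => by simpa using hρ i
  | _, const _, _, hg, _ => by simpa using hg
  | _, app u v, ρ, hg, hρ => by
    simp only [Good] at hg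
    simpa using IA.app_Sig (den_Sig IA u ρ hg.1 hρ) (den_Sig IA v ρ hg.2 hρ)

/-- Bracket abstraction of the last variable. -/
@[simp] def bra (IA : ImplicativeAlgebra A) : ∀ {n}, SKTm A (n + 1) → SKTm A n
  | _, var i => Fin.lastCases (const IA.Ic) (fun j => app (const IA.Kc) (var j)) i
  | _, const c => app (const IA.Kc) (const c)
  | _, app u v => app (app (const IA.Sc) (bra IA u)) (bra IA v)

theorem bra_Good (IA : ImplicativeAlgebra A) :
    ∀ {n} (t : SKTm A (n + 1)), t.Good IA → (bra IA t).Good IA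
  | _, var i, _ => by
    refine Fin.lastCases ?_ (fun j => ?_) i
    · simpa using IA.Ic_Sig
    · simpa using IA.Kc_Sig
  | _, const c, hg => by
    simp only [Good, bra] at hg ⊢
    exact ⟨IA.Kc_Sig, hg⟩
  | _, app u v, hg => by
    simp only [Good, bra] at hg ⊢
    exact ⟨⟨IA.Sc_Sig, bra_Good IA u hg.1⟩, bra_Good IA v hg.2⟩

theorem bra_spec (IA : ImplicativeAlgebra A) :
    ∀ {n} (t : SKTm A (n + 1)) (ρ : Fin n → A) (a : A),
      IA.app ((bra IA t).den IA ρ) a ≤ t.den IA (Fin.snoc ρ a)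
  | _, var i, ρ, a => by
    refine Fin.lastCases ?_ (fun j => ?_) i
    · simpa using IA.app_Ic a
    · simpa using IA.app_Kc (le_refl (ρ j))
  | _, const c, ρ, a => by simpa using IA.app_Kc (le_refl c)
  | _, app u v, ρ, a => by
    simp only [bra, den]
    exact (IA.app_Sc _ _ _).trans (IA.app_mono (bra_spec IA u ρ a) (bra_spec IA v ρ a))

end SKTm

/-- `Nice` functions of environments: those built from variables, constants in the
separator, application and abstraction. -/
inductive Nice (IA : ImplicativeAlgebra A) : ∀ {n : ℕ}, ((Fin n → A) → A) → Prop
  | var {n} (i : Fin n) : Nice IA (fun ρ => ρ i)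
  | const {n} {c : A} (h : c ∈ IA.Sig) : Nice IA (n := n) (fun _ => c)
  | app {n} {f g : (Fin n → A) → A} (hf : Nice IA f) (hg : Nice IA g) :
      Nice IA (fun ρ => IA.app (f ρ) (g ρ))
  | lam {n} {f : (Fin (n + 1) → A) → A} (hf : Nice IA f) :
      Nice IA (fun ρ => IA.abs fun a => f (Fin.snoc ρ a))

theorem Nice.congr {IA : ImplicativeAlgebra A} {n} {f g : (Fin n → A) → A}
    (hf : Nice IA f) (h : ∀ ρ, f ρ = g ρ) : Nice IA g := by
  have : f = g := funext h
  exact this ▸ hf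

theorem Nice.toSK {IA : ImplicativeAlgebra A} {n} {f : (Fin n → A) → A}
    (hf : Nice IA f) : ∃ t : SKTm A n, t.Good IA ∧ ∀ ρ, t.den IA ρ ≤ f ρ := by
  induction hf with
  | var i => exact ⟨.var i, by simp, fun ρ => by simp⟩
  | const h => exact ⟨.const _, by simpa using h, fun ρ => by simp⟩
  | app hf hg ihf ihg =>
    obtain ⟨t, ht, hle⟩ := ihf
    obtain ⟨s, hs, hle'⟩ := ihg
    exact ⟨.app t s, by simp only [SKTm.Good]; exact ⟨ht, hs⟩,
      fun ρ => by simpa using IA.app_mono (hle ρ) (hle' ρ)⟩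
  | lam hf ih =>
    obtain ⟨t, ht, hle⟩ := ih
    refine ⟨SKTm.bra IA t, SKTm.bra_Good IA t ht, fun ρ => le_iInf fun a => ?_⟩
    exact (IA.le_imp_app _ a).trans
      (IA.imp_monotone ((SKTm.bra_spec IA t ρ a).trans (hle _)))

/-- A closed `Nice` element belongs to the separator. -/
theorem Nice.sig {IA : ImplicativeAlgebra A} {f : (Fin 0 → A) → A}
    (hf : Nice IA f) (ρ : Fin 0 → A) : f ρ ∈ IA.Sig := by
  obtain ⟨t, ht, hle⟩ := hf.toSK
  exact IA.Sig_upward (SKTm.den_Sig IA t ρ ht (fun i => i.elim0)) (hle ρ)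

/-- Smart constructor for abstraction. -/
theorem Nice.abs' {IA : ImplicativeAlgebra A} {n} {f : (Fin n → A) → A → A}
    (h : Nice IA (fun σ : Fin (n + 1) → A => f (fun i => σ i.castSucc) (σ (Fin.last n)))) :
    Nice IA (fun ρ => IA.abs (f ρ)) := by
  refine (Nice.lam h).congr (fun ρ => ?_)
  congr 1
  funext a
  simp

/-- Renaming of variables preserves `Nice`. -/
theorem Nice.ren {IA : ImplicativeAlgebra A} {n} {f : (Fin n → A) → A}
    (hf : Nice IA f) : ∀ {m} (r : Fin n → Fin m), Nice IA (fun ρ => f (fun i => ρ (r i))) := by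
  induction hf with
  | var i => exact fun r => Nice.var (r i)
  | const h => exact fun _ => Nice.const h
  | app hf hg ihf ihg => exact fun r => Nice.app (ihf r) (ihg r)
  | @lam k f0 hf ih =>
    intro m r
    refine (Nice.lam (ih (Fin.snoc (fun i => Fin.castSucc (r i)) (Fin.last m)))).congr
      fun ρ => ?_
    congr 1
    funext a
    congr 1
    funext i
    refine Fin.lastCases ?_ (fun j => ?_) i <;> simp

end ImplicativeAlgebra
/-! ### Semantic pairing, injections, fixed points -/

namespace ImplicativeAlgebra

variable {A : Type u} [CompleteLattice A] (IA : ImplicativeAlgebra A)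

/-- Semantic pairing. -/
def pairA (a b : A) : A := IA.abs fun z => IA.app (IA.app z a) b

theorem pairA_le_times {a' b' a b : A} (ha : a' ≤ a) (hb : b' ≤ b) :
    IA.pairA a' b' ≤ IA.times a b := by
  refine le_iInf fun x => IA.abs_le_imp ?_
  have hz : IA.imp a (IA.imp b x) ≤ IA.imp a' (IA.imp b' x) :=
    (IA.imp_antitone ha).trans (IA.imp_monotone (IA.imp_antitone hb))
  exact IA.app_le (IA.app_le hz)

/-- First projection. -/
def fstA (p : A) : A := IA.app p IA.Kc

/-- Second projection. -/
def sndA (p : A) : A := IA.app p (IA.app IA.Kc IA.Ic)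

theorem fstA_le {p a b : A} (h : p ≤ IA.times a b) : IA.fstA p ≤ a := by
  refine IA.app_le ((h.trans (iInf_le _ a)).trans (IA.imp_antitone (IA.Kc_le a b)))

theorem sndA_le {p a b : A} (h : p ≤ IA.times a b) : IA.sndA p ≤ b := by
  have h1 : IA.app IA.Kc IA.Ic ≤ IA.imp a (IA.imp b b) :=
    (IA.le_imp_app _ a).trans (IA.imp_monotone ((IA.app_Kc le_rfl).trans (IA.Ic_le b)))
  have h2 : p ≤ IA.imp (IA.imp a (IA.imp b b)) b := h.trans (iInf_le _ b)
  exact IA.app_le (h2.trans (IA.imp_antitone h1))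

/-- Injection into an existential. -/
def injA (c : A) : A := IA.abs fun k => IA.app k c

theorem injA_le {ι : Sort*} {c : A} {f : ι → A} (i : ι) (h : c ≤ f i) :
    IA.injA c ≤ IA.aex f := by
  refine le_iInf fun x => IA.abs_le_imp ?_
  exact IA.app_le₂ ((iInf_le _ i).trans (IA.imp_antitone h)) le_rfl

theorem aex_elim {ι : Sort*} {m k x : A} {f : ι → A} (hm : m ≤ IA.aex f)
    (hk : ∀ i, k ≤ IA.imp (f i) x) : IA.app m k ≤ x :=
  IA.app_le ((hm.trans (iInf_le _ x)).trans (IA.imp_antitone (le_iInf hk)))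

/-- Curry-style fixed point. -/
def Ycomb (f : A) : A :=
  IA.app (IA.abs fun x => IA.app f (IA.app x x)) (IA.abs fun x => IA.app f (IA.app x x))

theorem Ycomb_le (f : A) : IA.Ycomb f ≤ IA.app f (IA.Ycomb f) := IA.app_abs _ _

/- Nice smart constructors for the helpers. -/
variable {IA}

theorem Nice.pairA {n} {f g : (Fin n → A) → A} (hf : Nice IA f) (hg : Nice IA g) :
    Nice IA (fun ρ => IA.pairA (f ρ) (g ρ)) := by
  unfold ImplicativeAlgebra.pairA
  exact Nice.abs' (Nice.app (Nice.app (Nice.var (Fin.last n)) (hf.ren Fin.castSucc))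
    (hg.ren Fin.castSucc))

theorem Nice.fstA {n} {f : (Fin n → A) → A} (hf : Nice IA f) :
    Nice IA (fun ρ => IA.fstA (f ρ)) :=
  Nice.app hf (Nice.const IA.Kc_Sig)

theorem Nice.sndA {n} {f : (Fin n → A) → A} (hf : Nice IA f) :
    Nice IA (fun ρ => IA.sndA (f ρ)) :=
  Nice.app hf (Nice.app (Nice.const IA.Kc_Sig) (Nice.const IA.Ic_Sig))

theorem Nice.injA {n} {f : (Fin n → A) → A} (hf : Nice IA f) :
    Nice IA (fun ρ => IA.injA (f ρ)) := by
  unfold ImplicativeAlgebra.injA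
  exact Nice.abs' (Nice.app (Nice.var (Fin.last n)) (hf.ren Fin.castSucc))

theorem Nice.Ycomb {n} {f : (Fin n → A) → A} (hf : Nice IA f) :
    Nice IA (fun ρ => IA.Ycomb (f ρ)) := by
  unfold ImplicativeAlgebra.Ycomb
  exact Nice.app
    (Nice.abs' (Nice.app (hf.ren Fin.castSucc)
      (Nice.app (Nice.var (Fin.last n)) (Nice.var (Fin.last n)))))
    (Nice.abs' (Nice.app (hf.ren Fin.castSucc)
      (Nice.app (Nice.var (Fin.last n)) (Nice.var (Fin.last n)))))

end ImplicativeAlgebra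
/-! ### Realized symmetry and transitivity of `=_W` -/

theorem PreW.rank_fam_lt {A : Type u} : ∀ (w : PreW A) (i : w.dom), (w.fam i).rank < w.rank
  | ⟨ι, f, v⟩, i => PreW.rank_lt_mk f v i

namespace ImplicativeAlgebra

variable {A : Type u} [CompleteLattice A] (IA : ImplicativeAlgebra A)

theorem eqW_def : ∀ α β : PreW A,
    IA.eqW α β = IA.times (IA.subW α β) (IA.subW β α)
  | ⟨ι₁, f₁, v₁⟩, ⟨ι₂, f₂, v₂⟩ => by
    rw [eqW]
    rfl

/-- The realizer of symmetry. -/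
noncomputable def symR : A := IA.abs fun p => IA.pairA (IA.sndA p) (IA.fstA p)

theorem symR_Sig : IA.symR ∈ IA.Sig := by
  have : Nice IA (fun _ : Fin 0 → A => IA.symR) := by
    unfold ImplicativeAlgebra.symR
    exact Nice.abs' (Nice.pairA (Nice.sndA (Nice.var _)) (Nice.fstA (Nice.var _)))
  exact this.sig (fun i => i.elim0)

theorem symR_le (α β : PreW A) : IA.symR ≤ IA.imp (IA.eqW α β) (IA.eqW β α) := by
  refine IA.abs_le_imp ?_
  rw [IA.eqW_def α β, IA.eqW_def β α]
  exact IA.pairA_le_times (IA.sndA_le le_rfl) (IA.fstA_le le_rfl)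

/-- The recursive step of the transitivity realizer. -/
noncomputable def transF : A :=
  IA.abs fun T => IA.abs fun p => IA.abs fun q =>
    IA.pairA
      (IA.abs fun u => IA.app (IA.app (IA.fstA p) u)
        (IA.abs fun w => IA.app (IA.app (IA.fstA q) (IA.fstA w))
          (IA.abs fun w2 => IA.injA (IA.pairA (IA.fstA w2)
            (IA.app (IA.app T (IA.sndA w2)) (IA.sndA w))))))
      (IA.abs fun u => IA.app (IA.app (IA.sndA q) u)
        (IA.abs fun w => IA.app (IA.app (IA.sndA p) (IA.fstA w))
          (IA.abs fun w2 => IA.injA (IA.pairA (IA.fstA w2)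
            (IA.app (IA.app T (IA.sndA w2)) (IA.sndA w))))))

/-- The realizer of transitivity. -/
noncomputable def transR : A := IA.Ycomb IA.transF

theorem transR_Sig : IA.transR ∈ IA.Sig := by
  have : Nice IA (fun _ : Fin 0 → A => IA.transR) := by
    unfold ImplicativeAlgebra.transR ImplicativeAlgebra.transF
    refine Nice.Ycomb ?_
    refine Nice.abs' (Nice.abs' (Nice.abs' (Nice.pairA ?_ ?_))) <;>
    · refine Nice.abs' (Nice.app (Nice.app ?_ (Nice.var _)) ?_)
      · first
          | exact Nice.fstA (Nice.var _)
          | exact Nice.sndA (Nice.var _)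
      · refine Nice.abs' (Nice.app (Nice.app ?_ (Nice.fstA (Nice.var _))) ?_)
        · first
            | exact Nice.fstA (Nice.var _)
            | exact Nice.sndA (Nice.var _)
        · refine Nice.abs' (Nice.injA (Nice.pairA (Nice.fstA (Nice.var _))
            (Nice.app (Nice.app (Nice.var _) (Nice.sndA (Nice.var _)))
              (Nice.sndA (Nice.var _)))))
  exact this.sig (fun i => i.elim0)

end ImplicativeAlgebra

namespace ImplicativeAlgebra

variable {A : Type u} [CompleteLattice A] (IA : ImplicativeAlgebra A)

private theorem nadd_rev (a b c : Ordinal.{u}) : max a (max b c) = max c (max b a) := by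
  rw [max_comm b c, ← max_assoc, max_comm a c,
    max_assoc, max_comm a b]

theorem transR_le (α β γ : PreW A) :
    IA.transR ≤ IA.imp (IA.eqW α β) (IA.imp (IA.eqW β γ) (IA.eqW α γ)) := by
  have main : ∀ o : Ordinal.{u}, ∀ α β γ : PreW A,
      max α.rank (max β.rank γ.rank) = o →
      IA.transR ≤ IA.imp (IA.eqW α β) (IA.imp (IA.eqW β γ) (IA.eqW α γ)) := by
    intro o
    induction o using Ordinal.induction with
    | _ o IH =>
    intro α β γ ho
    have hstep : IA.app IA.transF IA.transR ≤
        (IA.abs fun p => IA.abs fun q =>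
          IA.pairA
            (IA.abs fun u => IA.app (IA.app (IA.fstA p) u)
              (IA.abs fun w => IA.app (IA.app (IA.fstA q) (IA.fstA w))
                (IA.abs fun w2 => IA.injA (IA.pairA (IA.fstA w2)
                  (IA.app (IA.app IA.transR (IA.sndA w2)) (IA.sndA w))))))
            (IA.abs fun u => IA.app (IA.app (IA.sndA q) u)
              (IA.abs fun w => IA.app (IA.app (IA.sndA p) (IA.fstA w))
                (IA.abs fun w2 => IA.injA (IA.pairA (IA.fstA w2)
                  (IA.app (IA.app IA.transR (IA.sndA w2)) (IA.sndA w))))))) :=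
      IA.app_abs _ _
    refine ((IA.Ycomb_le IA.transF).trans hstep).trans ?_
    refine IA.abs_le_imp (IA.abs_le_imp ?_)
    set p := IA.eqW α β with hp
    set q := IA.eqW β γ with hq
    have hpt : p ≤ IA.times (IA.subW α β) (IA.subW β α) := (IA.eqW_def α β).le
    have hqt : q ≤ IA.times (IA.subW β γ) (IA.subW γ β) := (IA.eqW_def β γ).le
    rw [IA.eqW_def α γ]
    refine IA.pairA_le_times ?_ ?_
    · -- subW α γ
      show _ ≤ ⨅ t : α.dom, IA.imp (α.val t) (IA.memW (α.fam t) γ)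
      refine le_iInf fun t => IA.abs_le_imp ?_
      have h2 : IA.app (IA.fstA p) (α.val t) ≤
          IA.aex (fun s : β.dom => IA.times (β.val s) (IA.eqW (β.fam s) (α.fam t))) :=
        IA.app_le (((IA.fstA_le hpt).trans (iInf_le _ t)))
      refine IA.aex_elim h2 fun s => IA.abs_le_imp ?_
      have h3 : IA.app (IA.fstA q) (IA.fstA (IA.times (β.val s) (IA.eqW (β.fam s) (α.fam t)))) ≤
          IA.aex (fun u2 : γ.dom => IA.times (γ.val u2) (IA.eqW (γ.fam u2) (β.fam s))) :=
        IA.app_le₂ ((IA.fstA_le hqt).trans (iInf_le _ s)) (IA.fstA_le le_rfl)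
      refine IA.aex_elim h3 fun u2 => IA.abs_le_imp ?_
      show _ ≤ IA.aex fun u3 : γ.dom => IA.times (γ.val u3) (IA.eqW (γ.fam u3) (α.fam t))
      refine IA.injA_le u2 (IA.pairA_le_times (IA.fstA_le le_rfl) ?_)
      have hlt : max (γ.fam u2).rank (max (β.fam s).rank (α.fam t).rank) < o := by
        rw [← ho, nadd_rev]
        exact max_lt_max (α.rank_fam_lt t)
          (max_lt_max (β.rank_fam_lt s) (γ.rank_fam_lt u2))
      have ih := IH _ hlt (γ.fam u2) (β.fam s) (α.fam t) rfl
      exact IA.app_le₂ (IA.app_le₂ ih (IA.sndA_le le_rfl)) (IA.sndA_le le_rfl)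
    · -- subW γ α
      show _ ≤ ⨅ t : γ.dom, IA.imp (γ.val t) (IA.memW (γ.fam t) α)
      refine le_iInf fun t => IA.abs_le_imp ?_
      have h2 : IA.app (IA.sndA q) (γ.val t) ≤
          IA.aex (fun s : β.dom => IA.times (β.val s) (IA.eqW (β.fam s) (γ.fam t))) :=
        IA.app_le (((IA.sndA_le hqt).trans (iInf_le _ t)))
      refine IA.aex_elim h2 fun s => IA.abs_le_imp ?_
      have h3 : IA.app (IA.sndA p) (IA.fstA (IA.times (β.val s) (IA.eqW (β.fam s) (γ.fam t)))) ≤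
          IA.aex (fun u2 : α.dom => IA.times (α.val u2) (IA.eqW (α.fam u2) (β.fam s))) :=
        IA.app_le₂ ((IA.sndA_le hpt).trans (iInf_le _ s)) (IA.fstA_le le_rfl)
      refine IA.aex_elim h3 fun u2 => IA.abs_le_imp ?_
      show _ ≤ IA.aex fun u3 : α.dom => IA.times (α.val u3) (IA.eqW (α.fam u3) (γ.fam t))
      refine IA.injA_le u2 (IA.pairA_le_times (IA.fstA_le le_rfl) ?_)
      have hlt : max (α.fam u2).rank (max (β.fam s).rank (γ.fam t).rank) < o := by
        rw [← ho]
        exact max_lt_max (α.rank_fam_lt u2)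
          (max_lt_max (β.rank_fam_lt s) (γ.rank_fam_lt t))
      have ih := IH _ hlt (α.fam u2) (β.fam s) (γ.fam t) rfl
      exact IA.app_le₂ (IA.app_le₂ ih (IA.sndA_le le_rfl)) (IA.sndA_le le_rfl)
  exact main _ α β γ rfl

end ImplicativeAlgebra
/-! ### Compatibility realizers -/

namespace ImplicativeAlgebra

variable {A : Type u} [CompleteLattice A] (IA : ImplicativeAlgebra A)

theorem appKI_le (a b : A) : IA.app IA.Kc IA.Ic ≤ IA.imp a (IA.imp b b) :=
  (IA.le_imp_app _ a).trans (IA.imp_monotone ((IA.app_Kc le_rfl).trans (IA.Ic_le b)))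

theorem appKI_Sig : IA.app IA.Kc IA.Ic ∈ IA.Sig := IA.app_Sig IA.Kc_Sig IA.Ic_Sig

/-- Realizer of `(α = β) → (α ∈ γ → β ∈ γ)`. -/
noncomputable def memLR : A :=
  IA.abs fun p => IA.abs fun m => IA.app m (IA.abs fun w =>
    IA.injA (IA.pairA (IA.fstA w) (IA.app (IA.app IA.transR (IA.sndA w)) p)))

/-- Realizer of `(α = β) → (γ ∈ α → γ ∈ β)`. -/
noncomputable def memRR : A :=
  IA.abs fun p => IA.abs fun m => IA.app m (IA.abs fun w =>
    IA.app (IA.app (IA.fstA p) (IA.fstA w)) (IA.abs fun w2 =>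
      IA.injA (IA.pairA (IA.fstA w2)
        (IA.app (IA.app IA.transR (IA.sndA w2)) (IA.sndA w)))))

/-- Realizer of `(α = β) → (α = γ → β = γ)`. -/
noncomputable def eqLR : A :=
  IA.abs fun p => IA.abs fun q => IA.app (IA.app IA.transR (IA.app IA.symR p)) q

/-- Realizer of `(α = β) → (γ = α → γ = β)`. -/
noncomputable def eqRR : A :=
  IA.abs fun p => IA.abs fun q => IA.app (IA.app IA.transR q) p

theorem memLR_Sig : IA.memLR ∈ IA.Sig := by
  have : Nice IA (fun _ : Fin 0 → A => IA.memLR) := by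
    unfold ImplicativeAlgebra.memLR
    exact Nice.abs' (Nice.abs' (Nice.app (Nice.var _)
      (Nice.abs' (Nice.injA (Nice.pairA (Nice.fstA (Nice.var _))
        (Nice.app (Nice.app (Nice.const IA.transR_Sig) (Nice.sndA (Nice.var _)))
          (Nice.var _)))))))
  exact this.sig (fun i => i.elim0)

theorem memRR_Sig : IA.memRR ∈ IA.Sig := by
  have : Nice IA (fun _ : Fin 0 → A => IA.memRR) := by
    unfold ImplicativeAlgebra.memRR
    exact Nice.abs' (Nice.abs' (Nice.app (Nice.var _)
      (Nice.abs' (Nice.app (Nice.app (Nice.fstA (Nice.var _)) (Nice.fstA (Nice.var _)))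
        (Nice.abs' (Nice.injA (Nice.pairA (Nice.fstA (Nice.var _))
          (Nice.app (Nice.app (Nice.const IA.transR_Sig) (Nice.sndA (Nice.var _)))
            (Nice.sndA (Nice.var _))))))))))
  exact this.sig (fun i => i.elim0)

theorem eqLR_Sig : IA.eqLR ∈ IA.Sig := by
  have : Nice IA (fun _ : Fin 0 → A => IA.eqLR) := by
    unfold ImplicativeAlgebra.eqLR
    exact Nice.abs' (Nice.abs' (Nice.app (Nice.app (Nice.const IA.transR_Sig)
      (Nice.app (Nice.const IA.symR_Sig) (Nice.var _))) (Nice.var _)))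
  exact this.sig (fun i => i.elim0)

theorem eqRR_Sig : IA.eqRR ∈ IA.Sig := by
  have : Nice IA (fun _ : Fin 0 → A => IA.eqRR) := by
    unfold ImplicativeAlgebra.eqRR
    exact Nice.abs' (Nice.abs' (Nice.app (Nice.app (Nice.const IA.transR_Sig)
      (Nice.var _)) (Nice.var _)))
  exact this.sig (fun i => i.elim0)

theorem memLR_le (α β γ : PreW A) :
    IA.memLR ≤ IA.imp (IA.eqW α β) (IA.imp (IA.memW α γ) (IA.memW β γ)) := by
  refine IA.abs_le_imp (IA.abs_le_imp ?_)
  have hm : IA.memW α γ ≤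
      IA.aex (fun s : γ.dom => IA.times (γ.val s) (IA.eqW (γ.fam s) α)) := le_rfl
  refine IA.aex_elim hm fun s => IA.abs_le_imp ?_
  show _ ≤ IA.aex fun s' : γ.dom => IA.times (γ.val s') (IA.eqW (γ.fam s') β)
  refine IA.injA_le s (IA.pairA_le_times (IA.fstA_le le_rfl) ?_)
  exact IA.app_le₂ (IA.app_le₂ (IA.transR_le (γ.fam s) α β) (IA.sndA_le le_rfl)) le_rfl

theorem memRR_le (α β γ : PreW A) :
    IA.memRR ≤ IA.imp (IA.eqW α β) (IA.imp (IA.memW γ α) (IA.memW γ β)) := by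
  refine IA.abs_le_imp (IA.abs_le_imp ?_)
  have hm : IA.memW γ α ≤
      IA.aex (fun s : α.dom => IA.times (α.val s) (IA.eqW (α.fam s) γ)) := le_rfl
  refine IA.aex_elim hm fun s => IA.abs_le_imp ?_
  have h2 : IA.app (IA.fstA (IA.eqW α β))
      (IA.fstA (IA.times (α.val s) (IA.eqW (α.fam s) γ))) ≤
      IA.aex (fun u : β.dom => IA.times (β.val u) (IA.eqW (β.fam u) (α.fam s))) :=
    IA.app_le₂ ((IA.fstA_le (IA.eqW_def α β).le).trans (iInf_le _ s)) (IA.fstA_le le_rfl)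
  refine IA.aex_elim h2 fun u => IA.abs_le_imp ?_
  show _ ≤ IA.aex fun u' : β.dom => IA.times (β.val u') (IA.eqW (β.fam u') γ)
  refine IA.injA_le u (IA.pairA_le_times (IA.fstA_le le_rfl) ?_)
  exact IA.app_le₂ (IA.app_le₂ (IA.transR_le (β.fam u) (α.fam s) γ)
    (IA.sndA_le le_rfl)) (IA.sndA_le le_rfl)

theorem eqLR_le (α β γ : PreW A) :
    IA.eqLR ≤ IA.imp (IA.eqW α β) (IA.imp (IA.eqW α γ) (IA.eqW β γ)) := by
  refine IA.abs_le_imp (IA.abs_le_imp ?_)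
  refine IA.app_le (IA.app_le₂ (IA.transR_le β α γ) (IA.app_le (IA.symR_le α β)))

theorem eqRR_le (α β γ : PreW A) :
    IA.eqRR ≤ IA.imp (IA.eqW α β) (IA.imp (IA.eqW γ α) (IA.eqW γ β)) := by
  refine IA.abs_le_imp (IA.abs_le_imp ?_)
  exact IA.app_le₂ (IA.app_le (IA.transR_le γ α β)) le_rfl

end ImplicativeAlgebra
/-! ### The realized Leibniz scheme -/

namespace ImplicativeAlgebra

variable {A : Type u} [CompleteLattice A]

theorem leibniz (IA : ImplicativeAlgebra A) (κ : Cardinal.{u}) :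
    ∀ {m} (φ : SetFormula m) (j : Fin m),
    ∃ L ∈ IA.Sig, ∀ (v : Fin m → WSet A κ) (β : WSet A κ),
      L ≤ IA.imp (IA.eqW (v j).1 β.1)
        (IA.imp (IA.interp κ φ v) (IA.interp κ φ (Function.update v j β)))
  | _, .bot, j => by
    refine ⟨IA.app IA.Kc IA.Ic, IA.appKI_Sig, fun v β => ?_⟩
    simp only [interp]
    exact IA.appKI_le _ _
  | _, .mem i k, j => by
    by_cases hi : i = j <;> by_cases hk : k = j
    · refine ⟨IA.abs fun p => IA.abs fun m =>
        IA.app (IA.app IA.memRR p) (IA.app (IA.app IA.memLR p) m), ?_, fun v β => ?_⟩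
      · have : Nice IA (fun _ : Fin 0 → A => IA.abs fun p => IA.abs fun m =>
            IA.app (IA.app IA.memRR p) (IA.app (IA.app IA.memLR p) m)) :=
          Nice.abs' (Nice.abs' (Nice.app (Nice.app (Nice.const IA.memRR_Sig) (Nice.var _))
            (Nice.app (Nice.app (Nice.const IA.memLR_Sig) (Nice.var _)) (Nice.var _))))
        exact this.sig (fun i => i.elim0)
      · simp only [interp]
        rw [hi, hk, Function.update_self]
        refine IA.abs_le_imp (IA.abs_le_imp ?_)
        have h1 : IA.app (IA.app IA.memLR (IA.eqW (v j).1 β.1)) (IA.memW (v j).1 (v j).1) ≤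
            IA.memW β.1 (v j).1 :=
          IA.app_le (IA.app_le (IA.memLR_le _ _ _))
        exact IA.app_le₂ (IA.app_le (IA.memRR_le (v j).1 β.1 β.1)) h1
    · refine ⟨IA.memLR, IA.memLR_Sig, fun v β => ?_⟩
      simp only [interp]
      rw [hi, Function.update_self, Function.update_of_ne hk]
      exact IA.memLR_le _ _ _
    · refine ⟨IA.memRR, IA.memRR_Sig, fun v β => ?_⟩
      simp only [interp]
      rw [hk, Function.update_self, Function.update_of_ne hi]
      exact IA.memRR_le _ _ _
    · refine ⟨IA.app IA.Kc IA.Ic, IA.appKI_Sig, fun v β => ?_⟩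
      simp only [interp, Function.update_of_ne hi, Function.update_of_ne hk]
      exact IA.appKI_le _ _
  | _, .eq i k, j => by
    by_cases hi : i = j <;> by_cases hk : k = j
    · refine ⟨IA.abs fun p => IA.abs fun q =>
        IA.app (IA.app IA.eqRR p) (IA.app (IA.app IA.eqLR p) q), ?_, fun v β => ?_⟩
      · have : Nice IA (fun _ : Fin 0 → A => IA.abs fun p => IA.abs fun q =>
            IA.app (IA.app IA.eqRR p) (IA.app (IA.app IA.eqLR p) q)) :=
          Nice.abs' (Nice.abs' (Nice.app (Nice.app (Nice.const IA.eqRR_Sig) (Nice.var _))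
            (Nice.app (Nice.app (Nice.const IA.eqLR_Sig) (Nice.var _)) (Nice.var _))))
        exact this.sig (fun i => i.elim0)
      · simp only [interp]
        rw [hi, hk, Function.update_self]
        refine IA.abs_le_imp (IA.abs_le_imp ?_)
        have h1 : IA.app (IA.app IA.eqLR (IA.eqW (v j).1 β.1)) (IA.eqW (v j).1 (v j).1) ≤
            IA.eqW β.1 (v j).1 :=
          IA.app_le (IA.app_le (IA.eqLR_le _ _ _))
        exact IA.app_le₂ (IA.app_le (IA.eqRR_le (v j).1 β.1 β.1)) h1
    · refine ⟨IA.eqLR, IA.eqLR_Sig, fun v β => ?_⟩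
      simp only [interp]
      rw [hi, Function.update_self, Function.update_of_ne hk]
      exact IA.eqLR_le _ _ _
    · refine ⟨IA.eqRR, IA.eqRR_Sig, fun v β => ?_⟩
      simp only [interp]
      rw [hk, Function.update_self, Function.update_of_ne hi]
      exact IA.eqRR_le _ _ _
    · refine ⟨IA.app IA.Kc IA.Ic, IA.appKI_Sig, fun v β => ?_⟩
      simp only [interp, Function.update_of_ne hi, Function.update_of_ne hk]
      exact IA.appKI_le _ _
  | _, .and φ ψ, j => by
    obtain ⟨L1, hL1s, hL1⟩ := leibniz IA κ φ j
    obtain ⟨L2, hL2s, hL2⟩ := leibniz IA κ ψ j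
    refine ⟨IA.abs fun p => IA.abs fun u =>
      IA.pairA (IA.app (IA.app L1 p) (IA.fstA u)) (IA.app (IA.app L2 p) (IA.sndA u)),
      ?_, fun v β => ?_⟩
    · have : Nice IA (fun _ : Fin 0 → A => IA.abs fun p => IA.abs fun u =>
          IA.pairA (IA.app (IA.app L1 p) (IA.fstA u)) (IA.app (IA.app L2 p) (IA.sndA u))) :=
        Nice.abs' (Nice.abs' (Nice.pairA
          (Nice.app (Nice.app (Nice.const hL1s) (Nice.var _)) (Nice.fstA (Nice.var _)))
          (Nice.app (Nice.app (Nice.const hL2s) (Nice.var _)) (Nice.sndA (Nice.var _)))))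
      exact this.sig (fun i => i.elim0)
    · simp only [interp]
      refine IA.abs_le_imp (IA.abs_le_imp (IA.pairA_le_times ?_ ?_))
      · exact IA.app_le₂ (IA.app_le (hL1 v β)) (IA.fstA_le le_rfl)
      · exact IA.app_le₂ (IA.app_le (hL2 v β)) (IA.sndA_le le_rfl)
  | _, .or φ ψ, j => by
    obtain ⟨L1, hL1s, hL1⟩ := leibniz IA κ φ j
    obtain ⟨L2, hL2s, hL2⟩ := leibniz IA κ ψ j
    refine ⟨IA.abs fun p => IA.abs fun u => IA.abs fun k1 => IA.abs fun k2 =>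
      IA.app (IA.app u (IA.abs fun a => IA.app k1 (IA.app (IA.app L1 p) a)))
        (IA.abs fun b => IA.app k2 (IA.app (IA.app L2 p) b)), ?_, fun v β => ?_⟩
    · have : Nice IA (fun _ : Fin 0 → A =>
          IA.abs fun p => IA.abs fun u => IA.abs fun k1 => IA.abs fun k2 =>
          IA.app (IA.app u (IA.abs fun a => IA.app k1 (IA.app (IA.app L1 p) a)))
            (IA.abs fun b => IA.app k2 (IA.app (IA.app L2 p) b))) :=
        Nice.abs' (Nice.abs' (Nice.abs' (Nice.abs' (Nice.app
          (Nice.app (Nice.var _) (Nice.abs' (Nice.app (Nice.var _)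
            (Nice.app (Nice.app (Nice.const hL1s) (Nice.var _)) (Nice.var _)))))
          (Nice.abs' (Nice.app (Nice.var _)
            (Nice.app (Nice.app (Nice.const hL2s) (Nice.var _)) (Nice.var _))))))))
      exact this.sig (fun i => i.elim0)
    · simp only [interp]
      refine IA.abs_le_imp (IA.abs_le_imp ?_)
      refine le_iInf fun x => IA.abs_le_imp (IA.abs_le_imp ?_)
      have hu : IA.plus (IA.interp κ φ v) (IA.interp κ ψ v) ≤
          IA.imp (IA.imp (IA.interp κ φ v) x)
            (IA.imp (IA.imp (IA.interp κ ψ v) x) x) := iInf_le _ x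
      have hK1 : (IA.abs fun a => IA.app (IA.imp (IA.interp κ φ (Function.update v j β)) x)
          (IA.app (IA.app L1 (IA.eqW (v j).1 β.1)) a)) ≤ IA.imp (IA.interp κ φ v) x := by
        refine IA.abs_le_imp (IA.app_le₂ le_rfl ?_)
        exact IA.app_le (IA.app_le (hL1 v β))
      have hK2 : (IA.abs fun b => IA.app (IA.imp (IA.interp κ ψ (Function.update v j β)) x)
          (IA.app (IA.app L2 (IA.eqW (v j).1 β.1)) b)) ≤ IA.imp (IA.interp κ ψ v) x := by
        refine IA.abs_le_imp (IA.app_le₂ le_rfl ?_)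
        exact IA.app_le (IA.app_le (hL2 v β))
      exact IA.app_le₂ (IA.app_le₂ hu hK1) hK2
  | _, .imp φ ψ, j => by
    obtain ⟨L1, hL1s, hL1⟩ := leibniz IA κ φ j
    obtain ⟨L2, hL2s, hL2⟩ := leibniz IA κ ψ j
    refine ⟨IA.abs fun p => IA.abs fun u => IA.abs fun a =>
      IA.app (IA.app L2 p) (IA.app u (IA.app (IA.app L1 (IA.app IA.symR p)) a)),
      ?_, fun v β => ?_⟩
    · have : Nice IA (fun _ : Fin 0 → A => IA.abs fun p => IA.abs fun u => IA.abs fun a =>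
          IA.app (IA.app L2 p) (IA.app u (IA.app (IA.app L1 (IA.app IA.symR p)) a))) :=
        Nice.abs' (Nice.abs' (Nice.abs' (Nice.app
          (Nice.app (Nice.const hL2s) (Nice.var _))
          (Nice.app (Nice.var _) (Nice.app (Nice.app (Nice.const hL1s)
            (Nice.app (Nice.const IA.symR_Sig) (Nice.var _))) (Nice.var _))))))
      exact this.sig (fun i => i.elim0)
    · simp only [interp]
      refine IA.abs_le_imp (IA.abs_le_imp (IA.abs_le_imp ?_))
      have h1 := hL1 (Function.update v j β) (v j)
      rw [Function.update_self, Function.update_idem, Function.update_eq_self] at h1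
      have h2 : IA.app (IA.app L1 (IA.app IA.symR (IA.eqW (v j).1 β.1)))
          (IA.interp κ φ (Function.update v j β)) ≤ IA.interp κ φ v :=
        IA.app_le (IA.app_le₂ h1 (IA.app_le (IA.symR_le _ _)))
      exact IA.app_le₂ (IA.app_le (hL2 v β)) (IA.app_le₂ le_rfl h2)
  | _, .ex φ, j => by
    obtain ⟨L1, hL1s, hL1⟩ := leibniz IA κ φ j.castSucc
    refine ⟨IA.abs fun p => IA.abs fun u =>
      IA.app u (IA.abs fun w => IA.injA (IA.app (IA.app L1 p) w)), ?_, fun v β => ?_⟩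
    · have : Nice IA (fun _ : Fin 0 → A => IA.abs fun p => IA.abs fun u =>
          IA.app u (IA.abs fun w => IA.injA (IA.app (IA.app L1 p) w))) :=
        Nice.abs' (Nice.abs' (Nice.app (Nice.var _) (Nice.abs' (Nice.injA
          (Nice.app (Nice.app (Nice.const hL1s) (Nice.var _)) (Nice.var _))))))
      exact this.sig (fun i => i.elim0)
    · simp only [interp]
      refine IA.abs_le_imp (IA.abs_le_imp ?_)
      refine IA.aex_elim le_rfl fun y => IA.abs_le_imp ?_
      refine IA.injA_le y ?_
      have h1 := hL1 (Fin.snoc v y) β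
      rw [Fin.snoc_castSucc, ← Fin.snoc_update] at h1
      exact IA.app_le (IA.app_le h1)
  | _, .all φ, j => by
    obtain ⟨L1, hL1s, hL1⟩ := leibniz IA κ φ j.castSucc
    refine ⟨L1, hL1s, fun v β => ?_⟩
    simp only [interp]
    rw [IA.imp_iInf, IA.imp_iInf]
    refine le_iInf fun y => ?_
    have h1 := hL1 (Fin.snoc v y) β
    rw [Fin.snoc_castSucc, ← Fin.snoc_update] at h1
    exact h1.trans (IA.imp_monotone (IA.imp_antitone (iInf_le _ y)))

end ImplicativeAlgebra
/-! ### Final assembly -/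

theorem PreW.HSmall_relabel {A : Type u} {κ : Cardinal.{u}} :
    ∀ {w : PreW A}, w.HSmall κ → ∀ vl : w.dom → A, (PreW.mk w.dom w.fam vl).HSmall κ
  | ⟨_, _, _⟩, hw, _ => hw

namespace ImplicativeAlgebra

variable {A : Type u} [CompleteLattice A]

theorem interp_rename (IA : ImplicativeAlgebra A) (κ : Cardinal.{u}) :
    ∀ {n m} (ψ : SetFormula n) (r : Fin n → Fin m) (v : Fin m → WSet A κ),
      IA.interp κ (ψ.rename r) v = IA.interp κ ψ (fun i => v (r i))
  | _, _, .bot, r, v => by simp only [SetFormula.rename, interp]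
  | _, _, .mem i j, r, v => by simp only [SetFormula.rename, interp]
  | _, _, .eq i j, r, v => by simp only [SetFormula.rename, interp]
  | _, _, .and φ ψ, r, v => by
    simp only [SetFormula.rename, interp, interp_rename IA κ φ r v, interp_rename IA κ ψ r v]
  | _, _, .or φ ψ, r, v => by
    simp only [SetFormula.rename, interp, interp_rename IA κ φ r v, interp_rename IA κ ψ r v]
  | _, _, .imp φ ψ, r, v => by
    simp only [SetFormula.rename, interp, interp_rename IA κ φ r v, interp_rename IA κ ψ r v]
  | _, _, .ex ψ, r, v => by
    simp only [SetFormula.rename, interp]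
    congr 1
    funext y
    rw [interp_rename IA κ ψ _ _]
    congr 1
    funext i
    refine Fin.lastCases ?_ (fun j => ?_) i <;> simp
  | _, _, .all ψ, r, v => by
    simp only [SetFormula.rename, interp]
    congr 1
    funext y
    rw [interp_rename IA κ ψ _ _]
    congr 1
    funext i
    refine Fin.lastCases ?_ (fun j => ?_) i <;> simp

theorem allClose_le (IA : ImplicativeAlgebra A) (κ : Cardinal.{u}) (r : A) :
    ∀ {n} (φ : SetFormula n), (∀ v, r ≤ IA.interp κ φ v) →
      ∀ v0 : Fin 0 → WSet A κ, r ≤ IA.interp κ φ.allClose v0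
  | 0, φ, h, v0 => h v0
  | n + 1, φ, h, v0 => by
    rw [SetFormula.allClose]
    refine allClose_le IA κ r (.all φ) (fun v => ?_) v0
    simp only [interp]
    exact le_iInf fun y => h _

end ImplicativeAlgebra
namespace ImplicativeAlgebra

variable {A : Type u} [CompleteLattice A]

theorem memW_mk (IA : ImplicativeAlgebra A) (γ : PreW A) (ι : Type u) (f : ι → PreW A)
    (vl : ι → A) :
    IA.memW γ (PreW.mk ι f vl) = IA.aex fun s : ι => IA.times (vl s) (IA.eqW (f s) γ) := rfl

end ImplicativeAlgebra
theorem stmt17 {A : Type u} [CompleteLattice A] (IA : ImplicativeAlgebra A)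
    (κ : Cardinal.{u}) (hκ : κ.IsInaccessible) (hA : Cardinal.mk A < κ) (n : ℕ) (φ : SetFormula (n + 2)) :
    IA.interp κ
      (SetFormula.allClose (SetFormula.all (SetFormula.ex
        ((SetFormula.all
            ((SetFormula.mem (⟨n + 2, by omega⟩ : Fin (n + 3)) ⟨n + 1, by omega⟩).imp
              ((SetFormula.mem (⟨n + 2, by omega⟩ : Fin (n + 3)) ⟨n, by omega⟩).and
                (φ.rename (Fin.snoc (fun i => i.castSucc.castSucc) (Fin.last (n + 2))))))).and
         (SetFormula.all
            ((SetFormula.mem (⟨n + 2, by omega⟩ : Fin (n + 3)) ⟨n, by omega⟩).imp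
              ((φ.rename (Fin.snoc (fun i => i.castSucc.castSucc) (Fin.last (n + 2)))).imp
                (SetFormula.mem (⟨n + 2, by omega⟩ : Fin (n + 3)) ⟨n + 1, by omega⟩))))))))
      (fun i => i.elim0) ∈ IA.Sig := by
  classical
  open ImplicativeAlgebra in
  obtain ⟨L, hLs, hL⟩ := IA.leibniz κ φ (Fin.last (n + 1))
  set c1 : A := IA.abs fun u => IA.app u (IA.abs fun w =>
    IA.pairA (IA.injA (IA.pairA (IA.fstA (IA.fstA w)) (IA.sndA w)))
      (IA.app (IA.app L (IA.sndA w)) (IA.sndA (IA.fstA w)))) with hc1def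
  set c2 : A := IA.abs fun u => IA.abs fun d => IA.app u (IA.abs fun w =>
    IA.injA (IA.pairA (IA.pairA (IA.fstA w)
      (IA.app (IA.app L (IA.app IA.symR (IA.sndA w))) d)) (IA.sndA w))) with hc2def
  set r : A := IA.abs fun k => IA.app k (IA.pairA c1 c2) with hrdef
  have hrS : r ∈ IA.Sig := by
    have hn : ImplicativeAlgebra.Nice IA (fun _ : Fin 0 → A => r) := by
      rw [hrdef, hc1def, hc2def]
      refine Nice.abs' (Nice.app (Nice.var _) (Nice.pairA ?_ ?_))
      · exact Nice.abs' (Nice.app (Nice.var _) (Nice.abs' (Nice.pairA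
          (Nice.injA (Nice.pairA (Nice.fstA (Nice.fstA (Nice.var _))) (Nice.sndA (Nice.var _))))
          (Nice.app (Nice.app (Nice.const hLs) (Nice.sndA (Nice.var _)))
            (Nice.sndA (Nice.fstA (Nice.var _)))))))
      · exact Nice.abs' (Nice.abs' (Nice.app (Nice.var _) (Nice.abs' (Nice.injA (Nice.pairA
          (Nice.pairA (Nice.fstA (Nice.var _))
            (Nice.app (Nice.app (Nice.const hLs)
              (Nice.app (Nice.const IA.symR_Sig) (Nice.sndA (Nice.var _)))) (Nice.var _)))
          (Nice.sndA (Nice.var _)))))))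
    exact hn.sig (fun i => i.elim0)
  refine IA.Sig_upward hrS (IA.allClose_le κ r _ (fun v => ?_) (fun i => i.elim0))
  have hidz : ∀ (w : Fin (n + 2) → WSet A κ) (z : WSet A κ),
      (Fin.snoc w z : Fin (n + 3) → WSet A κ) (⟨n + 2, by omega⟩ : Fin (n + 3)) = z := by
    intro w z
    have h : (⟨n + 2, by omega⟩ : Fin (n + 3)) = Fin.last (n + 2) := rfl
    rw [h, Fin.snoc_last]
  have hidy : ∀ (w : Fin (n + 2) → WSet A κ) (z : WSet A κ),
      (Fin.snoc w z : Fin (n + 3) → WSet A κ) (⟨n + 1, by omega⟩ : Fin (n + 3)) = w (Fin.last (n + 1)) := by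
    intro w z
    have h : (⟨n + 1, by omega⟩ : Fin (n + 3)) = (Fin.last (n + 1)).castSucc := rfl
    rw [h, Fin.snoc_castSucc]
  have hidx : ∀ (w : Fin (n + 2) → WSet A κ) (z : WSet A κ),
      (Fin.snoc w z : Fin (n + 3) → WSet A κ) (⟨n, by omega⟩ : Fin (n + 3)) = w ((Fin.last n).castSucc) := by
    intro w z
    have h : (⟨n, by omega⟩ : Fin (n + 3)) = ((Fin.last n).castSucc).castSucc := rfl
    rw [h, Fin.snoc_castSucc]
  have hren : ∀ (x y z : WSet A κ),
      (fun i => (Fin.snoc (Fin.snoc (Fin.snoc v x) y) z : Fin (n + 3) → WSet A κ)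
        ((Fin.snoc (fun i => Fin.castSucc (Fin.castSucc i)) (Fin.last (n + 2)) :
          Fin (n + 2) → Fin (n + 3)) i)) =
      Fin.snoc (Fin.snoc v x) z := by
    intro x y z
    funext i
    refine Fin.lastCases ?_ (fun j => ?_) i <;> simp
  simp only [ImplicativeAlgebra.interp, IA.interp_rename, hidz, hidy, hidx,
    Fin.snoc_last, Fin.snoc_castSucc, hren]
  refine le_iInf fun x => ?_
  set yW : WSet A κ := ⟨PreW.mk x.1.dom x.1.fam
    (fun i => IA.times (x.1.val i) (IA.interp κ φ (Fin.snoc (Fin.snoc v x) (x.fam i)))),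
    PreW.HSmall_relabel x.2 _⟩ with hyW
  refine le_iInf fun out => IA.abs_le_imp (IA.app_le₂ (iInf_le _ yW) ?_)
  refine IA.pairA_le_times ?_ ?_
  · -- c1 bound
    rw [hc1def]
    refine le_iInf fun z => IA.abs_le_imp ?_
    have hu : IA.memW z.1 yW.1 ≤ IA.aex (fun s : x.1.dom =>
        IA.times (IA.times (x.1.val s)
            (IA.interp κ φ (Fin.snoc (Fin.snoc v x) (x.fam s))))
          (IA.eqW (x.1.fam s) z.1)) := (IA.memW_mk z.1 _ _ _).le
    refine IA.aex_elim hu fun s => IA.abs_le_imp ?_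
    refine IA.pairA_le_times ?_ ?_
    · show _ ≤ IA.aex fun s' : x.1.dom => IA.times (x.1.val s') (IA.eqW (x.1.fam s') z.1)
      exact IA.injA_le s (IA.pairA_le_times (IA.fstA_le (IA.fstA_le le_rfl))
        (IA.sndA_le le_rfl))
    · have hLs2 := hL (Fin.snoc (Fin.snoc v x) (x.fam s)) z
      rw [Fin.snoc_last, Fin.update_snoc_last] at hLs2
      exact IA.app_le₂ (IA.app_le₂ hLs2 (IA.sndA_le le_rfl)) (IA.sndA_le (IA.fstA_le le_rfl))
  · -- c2 bound
    rw [hc2def]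
    refine le_iInf fun z => IA.abs_le_imp (IA.abs_le_imp ?_)
    have hu2 : IA.memW z.1 x.1 ≤ IA.aex (fun s : x.1.dom =>
        IA.times (x.1.val s) (IA.eqW (x.1.fam s) z.1)) := le_rfl
    refine IA.aex_elim hu2 fun s => IA.abs_le_imp ?_
    rw [show (yW.1 : PreW A) = PreW.mk x.1.dom x.1.fam _ from rfl, IA.memW_mk]
    refine IA.injA_le s (IA.pairA_le_times (IA.pairA_le_times (IA.fstA_le le_rfl) ?_)
      (IA.sndA_le le_rfl))
    have hLs3 := hL (Fin.snoc (Fin.snoc v x) z) (x.fam s)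
    rw [Fin.snoc_last, Fin.update_snoc_last] at hLs3
    have hsym : IA.app IA.symR (IA.sndA (IA.times (x.1.val s) (IA.eqW (x.1.fam s) z.1))) ≤
        IA.eqW z.1 (x.1.fam s) := IA.app_le₂ (IA.symR_le _ _) (IA.sndA_le le_rfl)
    exact IA.app_le₂ (IA.app_le₂ hLs3 hsym) le_rfl
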